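/- For d ≥ 4, with the four asterisk vertices v_1 = αβγ, v_2 = ᾱβ̄γ, v_3 = αβ̄γ̄, v_4 = ᾱβγ̄ (where α, β, γ are all-zero blocks of lengths as nearly equal as possible summing to d, and bars denote complementation), every ridge of C^d is covered by at most two of the sets Ast(v_1),...,Ast(v_4), and the number of ridges covered by exactly two of them equals d(d-3)/3 if d ≡ 0 (mod 3) and (d-1)(d-2)/3 if d ≡ 1, 2 (mod 3). -/
import Mathlib


namespace Cube

/-- A face of the `d`-cube: `none` = varying coordinate (X), `some b` = fixed at `b`. -/
abbrev Face (d : ℕ) := Fin d → Option Bool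

/-- `F` is a `k`-face: exactly `k` varying coordinates. -/
def IsKFace {d : ℕ} (F : Face d) (k : ℕ) : Prop :=
  (Finset.univ.filter fun i => F i = none).card = k

/-- `G` is a subface of `F`: `G` agrees with every fixed coordinate of `F`. -/
def Subface {d : ℕ} (G F : Face d) : Prop := ∀ i b, F i = some b → G i = some b

/-- Antipodal faces: same varying positions, opposite fixed values. -/
def Antipodal {d : ℕ} (F G : Face d) : Prop := ∀ i, G i = (F i).map (!·)

abbrev Vertex (d : ℕ) := Fin d → Bool

/-- The vertex `v` lies on the face `F`. -/
def VMem {d : ℕ} (v : Vertex d) (F : Face d) : Prop := ∀ i b, F i = some b → v i = b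

/-- A set of faces contains the face `G` if `G` is a subface of one of its members. -/
def SetContains {d : ℕ} (A : Set (Face d)) (G : Face d) : Prop := ∃ F ∈ A, Subface G F

end Cube

open Cube
open scoped Classical

/-- Auxiliary: the ridge fixing coordinates `pq.1` and `pq.2` to the common value
`decide (pq.1 < pq.2)`. -/
def ridgeOf {d : ℕ} (pq : Fin d × Fin d) : Face d :=
  fun i => if i = pq.1 ∨ i = pq.2 then some (decide (pq.1 < pq.2)) else none


private lemma aux_key (d a b : ℕ) (v : Fin 4 → Vertex d)
    (hv₁ : v 0 = fun _ => false)
    (hv₂ : v 1 = fun i => decide (i.val < a + b))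
    (hv₃ : v 2 = fun i => decide (a ≤ i.val))
    (hv₄ : v 3 = fun i => decide (i.val < a ∨ a + b ≤ i.val))
    (p : Fin d) (x : Bool) :
    (Finset.univ.filter fun j : Fin 4 => v j p = x).card = 2 := by
  classical
  rw [Finset.card_filter, Fin.sum_univ_four, hv₁, hv₂, hv₃, hv₄]
  cases x <;> simp only [decide_eq_true_eq, decide_eq_false_iff_not] <;>
    split_ifs <;> simp_all <;> omega

private lemma aux_cnt2 (d a b : ℕ) (v : Fin 4 → Vertex d)
    (hv₁ : v 0 = fun _ => false)
    (hv₂ : v 1 = fun i => decide (i.val < a + b))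
    (hv₃ : v 2 = fun i => decide (a ≤ i.val))
    (hv₄ : v 3 = fun i => decide (i.val < a ∨ a + b ≤ i.val))
    (p q : Fin d) (x y : Bool) :
    (Finset.univ.filter fun j : Fin 4 => v j p = x ∧ v j q = y).card = 2 ↔
      (((p.val < a ↔ q.val < a) ∧ (p.val < a + b ↔ q.val < a + b)) ∧ x = y) := by
  classical
  rw [Finset.card_filter, Fin.sum_univ_four, hv₁, hv₂, hv₃, hv₄]
  cases x <;> cases y <;> simp only [decide_eq_true_eq, decide_eq_false_iff_not] <;>
    split_ifs <;> simp_all <;> omega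

/-- with the four asterisk vertices built from the all-zero blocks
`α, β, γ` (of nearly equal lengths summing to `d`) and their complements, every
ridge lies in at most two of the four asterisk sets, and the number of
doubly-covered ridges is `d(d-3)/3` if `3 ∣ d` and `(d-1)(d-2)/3` otherwise. -/
theorem asterisk_double_cover_count (d : ℕ) (hd : 4 ≤ d)
    (a b c : ℕ) (ha : a = (d + 2) / 3) (hc : c = d / 3) (hb : b = d - a - c)
    (v : Fin 4 → Vertex d)
    (hv₁ : v 0 = fun _ => false)
    (hv₂ : v 1 = fun i => decide (i.val < a + b))
    (hv₃ : v 2 = fun i => decide (a ≤ i.val))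
    (hv₄ : v 3 = fun i => decide (i.val < a ∨ a + b ≤ i.val)) :
    (∀ R : Face d, IsKFace R (d - 2) →
      (Finset.univ.filter fun j : Fin 4 => VMem (v j) R).card ≤ 2) ∧
    (3 * {R : Face d | IsKFace R (d - 2) ∧
        (Finset.univ.filter fun j : Fin 4 => VMem (v j) R).card = 2}.ncard =
      if d % 3 = 0 then d * (d - 3) else (d - 1) * (d - 2)) := by
  -- basic arithmetic facts about the block lengths
  have habc : a + b + c = d := by omega
  -- the count of vertices agreeing with a single fixed coordinate is always 2
  have key := aux_key d a b v hv₁ hv₂ hv₃ hv₄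
  -- characterization of pairs covered exactly twice
  have hcnt2 := aux_cnt2 d a b v hv₁ hv₂ hv₃ hv₄
  -- fixed-coordinate extraction for ridges
  have hfix : ∀ R : Face d, IsKFace R (d - 2) →
      ∃ p q : Fin d, p ≠ q ∧
        (Finset.univ.filter fun i => ¬ (R i = none)) = {p, q} := by
    intro R hR
    have h1 := Finset.card_filter_add_card_filter_not
      (s := (Finset.univ : Finset (Fin d))) (p := fun i => R i = none)
    rw [Finset.card_univ, Fintype.card_fin] at h1
    unfold IsKFace at hR
    have h2 : (Finset.univ.filter fun i => ¬ (R i = none)).card = 2 := by omega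
    obtain ⟨p, q, hpq, hset⟩ := Finset.card_eq_two.mp h2
    exact ⟨p, q, hpq, hset⟩
  ----------------------------------------------------------------
  -- Part 1 : every ridge is covered at most twice
  ----------------------------------------------------------------
  have part1 : ∀ R : Face d, IsKFace R (d - 2) →
      (Finset.univ.filter fun j : Fin 4 => VMem (v j) R).card ≤ 2 := by
    intro R hR
    obtain ⟨p, q, hpq, hset⟩ := hfix R hR
    have hpm : p ∈ Finset.univ.filter fun i => ¬ (R i = none) := by
      rw [hset]; simp
    have hpne : ¬ (R p = none) := (Finset.mem_filter.mp hpm).2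
    obtain ⟨x, hx⟩ := Option.ne_none_iff_exists'.mp hpne
    calc (Finset.univ.filter fun j : Fin 4 => VMem (v j) R).card
        ≤ (Finset.univ.filter fun j : Fin 4 => v j p = x).card := by
          apply Finset.card_le_card
          intro j hj
          simp only [Finset.mem_filter, Finset.mem_univ, true_and] at *
          exact hj p x hx
      _ = 2 := key p x
  refine ⟨part1, ?_⟩
  ----------------------------------------------------------------
  -- Part 2 : counting doubly covered ridges
  ----------------------------------------------------------------
  set S : Set (Fin d × Fin d) := {pq | pq.1 ≠ pq.2 ∧
    (pq.1.val < a ↔ pq.2.val < a) ∧ (pq.1.val < a + b ↔ pq.2.val < a + b)} with hS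
  -- membership characterization for ridgeOf
  have hVmemr : ∀ (pq : Fin d × Fin d) (w : Vertex d),
      VMem w (ridgeOf pq) ↔ (w pq.1 = decide (pq.1 < pq.2) ∧ w pq.2 = decide (pq.1 < pq.2)) := by
    rintro ⟨p, q⟩ w
    constructor
    · intro h
      exact ⟨h p _ (by simp [ridgeOf]), h q _ (by simp [ridgeOf])⟩
    · rintro ⟨h1, h2⟩ i bb hib
      simp only [ridgeOf] at hib
      by_cases hi : i = p ∨ i = q
      · rw [if_pos hi] at hib
        injection hib with hib
        rcases hi with hi | hi <;> subst hi <;> rw [← hib] <;> assumption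
      · rw [if_neg hi] at hib; exact absurd hib (by simp)
  -- the doubly covered ridges are exactly the images of good pairs
  have hSeq : {R : Face d | IsKFace R (d - 2) ∧
      (Finset.univ.filter fun j : Fin 4 => VMem (v j) R).card = 2} = ridgeOf '' S := by
    apply Set.eq_of_subset_of_subset
    · -- forward inclusion
      rintro R ⟨hR, h2⟩
      obtain ⟨p, q, hpq, hset⟩ := hfix R hR
      have hmemiff : ∀ i : Fin d, ¬ (R i = none) ↔ (i = p ∨ i = q) := by
        intro i
        constructor
        · intro h
          have : i ∈ Finset.univ.filter fun i => ¬ (R i = none) := by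
            simp [Finset.mem_filter, h]
          rw [hset] at this; simpa using this
        · intro h
          have : i ∈ ({p, q} : Finset (Fin d)) := by simpa using h
          rw [← hset] at this
          exact (Finset.mem_filter.mp this).2
      obtain ⟨x, hx⟩ := Option.ne_none_iff_exists'.mp ((hmemiff p).mpr (Or.inl rfl))
      obtain ⟨y, hy⟩ := Option.ne_none_iff_exists'.mp ((hmemiff q).mpr (Or.inr rfl))
      have hw : ∀ w : Vertex d, VMem w R ↔ (w p = x ∧ w q = y) := by
        intro w
        constructor
        · intro h; exact ⟨h p x hx, h q y hy⟩
        · rintro ⟨h1, h2⟩ i bb hib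
          have : i = p ∨ i = q := (hmemiff i).mp (by rw [hib]; simp)
          rcases this with h | h <;> subst h
          · rw [hib] at hx; injection hx with hx; rw [hx]; exact h1
          · rw [hib] at hy; injection hy with hy; rw [hy]; exact h2
      rw [show (Finset.univ.filter fun j : Fin 4 => VMem (v j) R) =
          (Finset.univ.filter fun j : Fin 4 => v j p = x ∧ v j q = y) from
          Finset.filter_congr fun j _ => by rw [hw]] at h2
      obtain ⟨hsamb, hxy⟩ := (hcnt2 p q x y).mp h2
      subst hxy
      have hRnone : ∀ i, ¬ (i = p ∨ i = q) → R i = none := by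
        intro i hi
        by_contra h
        exact hi ((hmemiff i).mp h)
      have hkey : ∀ r s : Fin d, r ≠ s → (r = p ∨ r = q) → (s = p ∨ s = q) →
          decide (r < s) = x → R = ridgeOf (r, s) := by
        intro r s hrs hr hs hds
        funext i
        by_cases hi : i = p ∨ i = q
        · have hi' : i = r ∨ i = s := by
            rcases hi with hi | hi <;> subst hi <;> rcases hr with hr | hr <;>
              rcases hs with hs | hs <;> subst hr <;> try subst hs
            all_goals tauto
          have hRx : R i = some x := by
            rcases hi with hi | hi <;> subst hi <;> assumption
          simp only [ridgeOf, if_pos hi', hRx, hds]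
        · have hi' : ¬ (i = r ∨ i = s) := by
            intro h; apply hi
            rcases h with h | h <;> subst h <;> tauto
          simp only [ridgeOf, if_neg hi', hRnone i hi]
      have hsambsymm : ((q.val < a ↔ p.val < a) ∧ (q.val < a + b ↔ p.val < a + b)) :=
        ⟨hsamb.1.symm, hsamb.2.symm⟩
      rcases lt_or_gt_of_ne hpq with hlt | hlt <;> cases x
      · exact ⟨(q, p), ⟨hpq.symm, hsambsymm⟩,
          (hkey q p hpq.symm (Or.inr rfl) (Or.inl rfl) (by simp [not_lt.mpr (le_of_lt hlt)])).symm⟩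
      · exact ⟨(p, q), ⟨hpq, hsamb⟩,
          (hkey p q hpq (Or.inl rfl) (Or.inr rfl) (by simp [hlt])).symm⟩
      · exact ⟨(p, q), ⟨hpq, hsamb⟩,
          (hkey p q hpq (Or.inl rfl) (Or.inr rfl) (by simp [not_lt.mpr (le_of_lt hlt)])).symm⟩
      · exact ⟨(q, p), ⟨hpq.symm, hsambsymm⟩,
          (hkey q p hpq.symm (Or.inr rfl) (Or.inl rfl) (by simp [hlt])).symm⟩
    · -- backward inclusion
      rintro R ⟨⟨p, q⟩, ⟨hpq, hsamb⟩, rfl⟩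
      constructor
      · unfold IsKFace
        have heq : (Finset.univ.filter fun i => ridgeOf (p, q) i = none) =
            ({p, q} : Finset (Fin d))ᶜ := by
          ext i
          by_cases h : i = p ∨ i = q <;>
            simp [ridgeOf, h, Finset.mem_compl, Finset.mem_insert, Finset.mem_singleton]
        rw [heq, Finset.card_compl, Fintype.card_fin,
          Finset.card_insert_of_notMem (by simpa using hpq), Finset.card_singleton]
      · rw [show (Finset.univ.filter fun j : Fin 4 => VMem (v j) (ridgeOf (p, q))) =
            (Finset.univ.filter fun j : Fin 4 =>
              v j p = decide (p < q) ∧ v j q = decide (p < q)) from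
            Finset.filter_congr fun j _ => by rw [hVmemr]]
        exact (hcnt2 p q _ _).mpr ⟨hsamb, rfl⟩
  -- ridgeOf is injective on good pairs
  have hinj : Set.InjOn ridgeOf S := by
    rintro ⟨p, q⟩ ⟨hpq, -⟩ ⟨r, s⟩ ⟨hrs, -⟩ heq
    simp only [ne_eq] at hpq hrs
    have h1 := congrFun heq p
    have h2 := congrFun heq q
    have h3 := congrFun heq r
    have h4 := congrFun heq s
    simp only [ridgeOf] at h1 h2 h3 h4
    simp only [true_or, or_true, if_true, ite_true] at h1 h2 h3 h4
    have e1 : p = r ∨ p = s := by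
      by_contra h; push_neg at h; rw [if_neg (by tauto)] at h1; exact absurd h1 (by simp)
    have e2 : q = r ∨ q = s := by
      by_contra h; push_neg at h; rw [if_neg (by tauto)] at h2; exact absurd h2 (by simp)
    have e3 : r = p ∨ r = q := by
      by_contra h; push_neg at h; rw [if_neg (by tauto)] at h3; exact absurd h3.symm (by simp)
    rw [if_pos e1] at h1
    injection h1 with h1
    have hvd : (p.val < q.val ↔ r.val < s.val) := by
      have hlt := decide_eq_decide.mp h1
      rwa [Fin.lt_def, Fin.lt_def] at hlt
    have hfin : p.val = r.val ∧ q.val = s.val := by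
      have e1' : p.val = r.val ∨ p.val = s.val := by
        rcases e1 with e | e <;> [left; right] <;> rw [e]
      have e2' : q.val = r.val ∨ q.val = s.val := by
        rcases e2 with e | e <;> [left; right] <;> rw [e]
      have e3' : r.val = p.val ∨ r.val = q.val := by
        rcases e3 with e | e <;> [left; right] <;> rw [e]
      have hpq' : p.val ≠ q.val := fun h => hpq (Fin.ext h)
      have hrs' : r.val ≠ s.val := fun h => hrs (Fin.ext h)
      omega
    exact Prod.ext (Fin.ext hfin.1) (Fin.ext hfin.2)
  rw [hSeq, Set.ncard_image_of_injOn hinj]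
  -- cardinality of good pairs
  have hScoe : S = ↑((Finset.univ : Finset (Fin d × Fin d)).filter fun pq =>
      pq.1 ≠ pq.2 ∧ (pq.1.val < a ↔ pq.2.val < a) ∧ (pq.1.val < a + b ↔ pq.2.val < a + b)) := by
    ext pq; simp [hS]
  rw [hScoe, Set.ncard_coe_finset]
  -- count the good pairs blockwise
  have hIco : ∀ (l r : ℕ), r ≤ d →
      (Finset.univ.filter fun i : Fin d => l ≤ i.val ∧ i.val < r).card = r - l := by
    intro l r hr
    rw [← Nat.card_Ico l r]
    apply Finset.card_bij (fun i _ => i.val)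
    · intro i hi; simp_all [Finset.mem_Ico]
    · intro i _ j _ h; exact Fin.ext h
    · intro n hn; simp only [Finset.mem_Ico] at hn
      exact ⟨⟨n, by omega⟩, by simp; omega, rfl⟩
  set B0 : Finset (Fin d) := Finset.univ.filter (fun i => 0 ≤ i.val ∧ i.val < a) with hB0
  set B1 : Finset (Fin d) := Finset.univ.filter (fun i => a ≤ i.val ∧ i.val < a + b) with hB1
  set B2 : Finset (Fin d) := Finset.univ.filter (fun i => a + b ≤ i.val ∧ i.val < d) with hB2
  have hc0 : B0.card = a := by rw [hB0, hIco 0 a (by omega)]; omega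
  have hc1 : B1.card = b := by rw [hB1, hIco a (a+b) (by omega)]; omega
  have hc2 : B2.card = c := by rw [hB2, hIco (a+b) d (by omega)]; omega
  have hsplit : ((Finset.univ : Finset (Fin d × Fin d)).filter fun pq =>
        pq.1 ≠ pq.2 ∧ (pq.1.val < a ↔ pq.2.val < a) ∧ (pq.1.val < a + b ↔ pq.2.val < a + b))
      = B0.offDiag ∪ B1.offDiag ∪ B2.offDiag := by
    ext ⟨p, q⟩
    have hpd := p.isLt
    have hqd := q.isLt
    simp only [Finset.mem_filter, Finset.mem_union, Finset.mem_offDiag, Finset.mem_univ,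
      true_and, hB0, hB1, hB2, ne_eq, Fin.ext_iff]
    constructor
    · intro h; omega
    · intro h; omega
  rw [hsplit, Finset.card_union_of_disjoint, Finset.card_union_of_disjoint,
    Finset.offDiag_card, Finset.offDiag_card, Finset.offDiag_card, hc0, hc1, hc2]
  -- final arithmetic
  · have h3 := Nat.div_add_mod d 3
    have hk1 : 1 ≤ d / 3 := by omega
    set k := d / 3 with hk
    have e1 : k ≤ k * k := Nat.le_mul_of_pos_left k hk1
    have e2 : (k+1) ≤ (k+1) * (k+1) := Nat.le_mul_of_pos_left _ (by omega)
    rcases (by omega : d % 3 = 0 ∨ d % 3 = 1 ∨ d % 3 = 2) with h | h | h <;>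
      [rw [if_pos h]; rw [if_neg (by omega)]; rw [if_neg (by omega)]]
    · have ha' : a = k := by omega
      have hb' : b = k := by omega
      have hc' : c = k := by omega
      have hd' : d = 3 * k := by omega
      rw [ha', hb', hc', hd']
      zify [e1, hk1, show 3 ≤ 3*k by omega]
      ring
    · have ha' : a = k + 1 := by omega
      have hb' : b = k := by omega
      have hc' : c = k := by omega
      have hd' : d = 3 * k + 1 := by omega
      rw [ha', hb', hc', hd']
      zify [e1, e2, hk1, show 1 ≤ 3*k+1 by omega, show 2 ≤ 3*k+1 by omega]
      ring
    · have ha' : a = k + 1 := by omega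
      have hb' : b = k + 1 := by omega
      have hc' : c = k := by omega
      have hd' : d = 3 * k + 2 := by omega
      rw [ha', hb', hc', hd']
      zify [e1, e2, hk1, show 1 ≤ 3*k+2 by omega, show 2 ≤ 3*k+2 by omega]
      ring
  · apply Finset.disjoint_left.mpr
    rintro ⟨p, q⟩ h1 h2
    simp only [Finset.mem_offDiag, hB0, hB1, Finset.mem_filter] at h1 h2
    omega
  · apply Finset.disjoint_left.mpr
    rintro ⟨p, q⟩ h1 h2
    simp only [Finset.mem_union, Finset.mem_offDiag, hB0, hB1, hB2, Finset.mem_filter] at h1 h2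
    rcases h1 with h1 | h1 <;> omega
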